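/- Fix σ ∈ [0,1], ε > 0 and reals 0 < L < U. Let K ≥ 1 and let L = c_1 < c_2 < ... < c_{K+1} = U be the greedy breakpoints: for each k ∈ {1,...,K}, c_{k+1} is the largest u ∈ (c_k, U] such that Φ^f(c_k, u) ≤ ε and Φ^g(c_k, u) ≤ ε. Let K' ≥ 1 and let L = d_1 ≤ d_2 ≤ ... ≤ d_{K'+1} = U be any points satisfying Φ^f(d_k, d_{k+1}) ≤ ε and Φ^g(d_k, d_{k+1}) ≤ ε for every k ∈ {1,...,K'} with d_k < d_{k+1}. Then K ≤ K'; that is, the greedy partition uses the minimum possible number of sub-intervals achieving relative error at most ε for both f and g. -/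

import Mathlib

/-- f(t) = t^(σ-1) (real power). -/
noncomputable def fCNL (σ t : ℝ) : ℝ := t ^ (σ - 1)

/-- g(t) = t^σ (real power). -/
noncomputable def gCNL (σ t : ℝ) : ℝ := t ^ σ

/-- Chord (linear interpolation) approximation of f on [c,u], evaluated at t. -/
noncomputable def fhat (σ c u t : ℝ) : ℝ :=
  fCNL σ c + ((fCNL σ u - fCNL σ c) / (u - c)) * (t - c)

/-- Chord (linear interpolation) approximation of g on [c,u], evaluated at t. -/
noncomputable def ghat (σ c u t : ℝ) : ℝ :=
  gCNL σ c + ((gCNL σ u - gCNL σ c) / (u - c)) * (t - c)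

/-- Pointwise relative error of the chord approximation of f. -/
noncomputable def phiF (σ c u t : ℝ) : ℝ := (fhat σ c u t - fCNL σ t) / fCNL σ t

/-- Pointwise relative error of the chord approximation of g. -/
noncomputable def phiG (σ c u t : ℝ) : ℝ := (gCNL σ t - ghat σ c u t) / gCNL σ t

/-- Maximum relative error of the chord approximation of f on [c,u]. -/
noncomputable def PhiF (σ c u : ℝ) : ℝ := sSup (phiF σ c u '' Set.Icc c u)

/-- Maximum relative error of the chord approximation of g on [c,u]. -/
noncomputable def PhiG (σ c u : ℝ) : ℝ := sSup (phiG σ c u '' Set.Icc c u)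

/-! ### Auxiliary lemmas -/

/-- An affine function nonnegative at the endpoints of an interval is nonnegative inside. -/
lemma affine_nonneg_aux {m q b u t : ℝ} (hb : 0 ≤ m * b + q) (hu : 0 ≤ m * u + q)
    (h1 : b ≤ t) (h2 : t ≤ u) : 0 ≤ m * t + q := by
  rcases eq_or_lt_of_le (h1.trans h2) with h | h
  · have : t = b := le_antisymm (h ▸ h2) h1
    simpa [this] using hb
  · nlinarith [mul_nonneg (sub_nonneg.2 h2) hb, mul_nonneg (sub_nonneg.2 h1) hu]

/-- Convexity of `x ↦ x ^ p` on `(0,∞)` for `p ≤ 0`. -/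
lemma convexOn_rpow_nonpos {p : ℝ} (hp : p ≤ 0) :
    ConvexOn ℝ (Set.Ioi 0) (fun x : ℝ => x ^ p) := by
  refine convexOn_of_hasDerivWithinAt2_nonneg (f' := fun x => p * x ^ (p - 1))
    (f'' := fun x => p * ((p - 1) * x ^ (p - 1 - 1))) (convex_Ioi 0) ?_ ?_ ?_ ?_
  · intro x hx
    exact (Real.continuousAt_rpow_const x p (Or.inl (ne_of_gt hx))).continuousWithinAt
  · intro x hx
    rw [interior_Ioi] at hx
    exact (Real.hasDerivAt_rpow_const (Or.inl (ne_of_gt hx))).hasDerivWithinAt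
  · intro x hx
    rw [interior_Ioi] at hx
    exact ((Real.hasDerivAt_rpow_const (p := p - 1)
      (Or.inl (ne_of_gt hx))).const_mul p).hasDerivWithinAt
  · intro x hx
    rw [interior_Ioi] at hx
    have h1 : (0:ℝ) < x ^ (p - 1 - 1) := Real.rpow_pos_of_pos hx _
    have h2 : 0 ≤ (-p) * (-(p - 1)) := mul_nonneg (by linarith) (by linarith)
    have h3 := mul_nonneg h2 h1.le
    show 0 ≤ p * ((p - 1) * x ^ (p - 1 - 1))
    nlinarith

/-- Concavity of `x ↦ x ^ p` on `(0,∞)` for `0 ≤ p ≤ 1`. -/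
lemma concaveOn_rpow_Ioi {p : ℝ} (hp0 : 0 ≤ p) (hp1 : p ≤ 1) :
    ConcaveOn ℝ (Set.Ioi 0) (fun x : ℝ => x ^ p) :=
  (Real.concaveOn_rpow hp0 hp1).subset (fun x hx => Set.mem_Ici.2 (le_of_lt (Set.mem_Ioi.1 hx))) (convex_Ioi 0)

/-- A convex function lies below its chord. -/
lemma convex_le_chord {f : ℝ → ℝ} (hcv : ConvexOn ℝ (Set.Ioi 0) f)
    {a b u : ℝ} (ha : 0 < a) (hau : a < u) (hb1 : a ≤ b) (hb2 : b ≤ u) :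
    f b ≤ f a + (f u - f a) / (u - a) * (b - a) := by
  have hua : (0:ℝ) < u - a := by linarith
  set θ : ℝ := (u - b) / (u - a) with hθ
  have hθ0 : 0 ≤ θ := div_nonneg (by linarith) hua.le
  have hθ1' : 0 ≤ 1 - θ := by
    rw [hθ]; rw [sub_nonneg, div_le_one hua]; linarith
  have hsum : θ + (1 - θ) = 1 := by ring
  have hmem_a : a ∈ Set.Ioi (0:ℝ) := ha
  have hmem_u : u ∈ Set.Ioi (0:ℝ) := lt_trans ha hau
  have hcomb := hcv.2 hmem_a hmem_u hθ0 hθ1' hsum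
  have hpt : θ • a + (1 - θ) • u = b := by
    rw [smul_eq_mul, smul_eq_mul, hθ]; field_simp
    ring
  rw [hpt] at hcomb
  have hchord : f a + (f u - f a) / (u - a) * (b - a) = θ * f a + (1 - θ) * f u := by
    rw [hθ]; field_simp
    ring
  rw [hchord]
  simpa [smul_eq_mul] using hcomb

/-- A concave function lies above its chord. -/
lemma concave_ge_chord {g : ℝ → ℝ} (hcc : ConcaveOn ℝ (Set.Ioi 0) g)
    {a b u : ℝ} (ha : 0 < a) (hau : a < u) (hb1 : a ≤ b) (hb2 : b ≤ u) :
    g a + (g u - g a) / (u - a) * (b - a) ≤ g b := by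
  have := convex_le_chord hcc.neg ha hau hb1 hb2
  simp only [Pi.neg_apply] at this
  rw [show (-g u - -g a) = -(g u - g a) by ring, neg_div] at this
  linarith

/-- Shrinking the left endpoint decreases the pointwise relative error of f. -/
lemma phiF_shrink {σ a b u t : ℝ} (hσ1 : σ ≤ 1) (ha : 0 < a)
    (hab : a ≤ b) (hbu : b < u) (ht1 : b ≤ t) (ht2 : t ≤ u) :
    phiF σ b u t ≤ phiF σ a u t := by
  have hb : 0 < b := lt_of_lt_of_le ha hab
  have hau : a < u := lt_of_le_of_lt hab hbu
  have hft : 0 < fCNL σ t := Real.rpow_pos_of_pos (lt_of_lt_of_le hb ht1) _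
  have key : fhat σ b u t ≤ fhat σ a u t := by
    have hcv := convexOn_rpow_nonpos (p := σ - 1) (by linarith)
    -- the difference (fhat a u) - (fhat b u) is affine in t, nonneg at b and u
    set Sa : ℝ := (fCNL σ u - fCNL σ a) / (u - a) with hSa
    set Sb : ℝ := (fCNL σ u - fCNL σ b) / (u - b) with hSb
    have hAb : 0 ≤ (Sa - Sb) * b + ((fCNL σ a - Sa * a) - (fCNL σ b - Sb * b)) := by
      have h1 : fCNL σ b ≤ fCNL σ a + Sa * (b - a) :=
        convex_le_chord hcv ha hau hab hbu.le
      nlinarith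
    have hAu : 0 ≤ (Sa - Sb) * u + ((fCNL σ a - Sa * a) - (fCNL σ b - Sb * b)) := by
      have hua : u - a ≠ 0 := by intro h; linarith [hau]
      have hub : u - b ≠ 0 := by intro h; linarith [hbu]
      have e1 : fCNL σ a + Sa * (u - a) = fCNL σ u := by
        rw [hSa]; field_simp; ring
      have e2 : fCNL σ b + Sb * (u - b) = fCNL σ u := by
        rw [hSb]; field_simp; ring
      nlinarith
    have := affine_nonneg_aux hAb hAu ht1 ht2
    unfold fhat
    rw [← hSa, ← hSb]
    nlinarith
  unfold phiF
  exact (div_le_div_iff_of_pos_right hft).2 (by linarith)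

/-- Shrinking the left endpoint decreases the pointwise relative error of g. -/
lemma phiG_shrink {σ a b u t : ℝ} (hσ0 : 0 ≤ σ) (hσ1 : σ ≤ 1) (ha : 0 < a)
    (hab : a ≤ b) (hbu : b < u) (ht1 : b ≤ t) (ht2 : t ≤ u) :
    phiG σ b u t ≤ phiG σ a u t := by
  have hb : 0 < b := lt_of_lt_of_le ha hab
  have hau : a < u := lt_of_le_of_lt hab hbu
  have hgt : 0 < gCNL σ t := Real.rpow_pos_of_pos (lt_of_lt_of_le hb ht1) _
  have key : ghat σ a u t ≤ ghat σ b u t := by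
    have hcc := concaveOn_rpow_Ioi hσ0 hσ1
    set Sa : ℝ := (gCNL σ u - gCNL σ a) / (u - a) with hSa
    set Sb : ℝ := (gCNL σ u - gCNL σ b) / (u - b) with hSb
    have hAb : 0 ≤ (Sb - Sa) * b + ((gCNL σ b - Sb * b) - (gCNL σ a - Sa * a)) := by
      have h1 : gCNL σ a + Sa * (b - a) ≤ gCNL σ b :=
        concave_ge_chord hcc ha hau hab hbu.le
      nlinarith
    have hAu : 0 ≤ (Sb - Sa) * u + ((gCNL σ b - Sb * b) - (gCNL σ a - Sa * a)) := by
      have hua : u - a ≠ 0 := by intro h; linarith [hau]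
      have hub : u - b ≠ 0 := by intro h; linarith [hbu]
      have e1 : gCNL σ a + Sa * (u - a) = gCNL σ u := by
        rw [hSa]; field_simp; ring
      have e2 : gCNL σ b + Sb * (u - b) = gCNL σ u := by
        rw [hSb]; field_simp; ring
      nlinarith
    have := affine_nonneg_aux hAb hAu ht1 ht2
    unfold ghat
    rw [← hSa, ← hSb]
    nlinarith
  unfold phiG
  exact (div_le_div_iff_of_pos_right hgt).2 (by linarith)

lemma continuousOn_rpow_Icc {a u p : ℝ} (ha : 0 < a) :
    ContinuousOn (fun t : ℝ => t ^ p) (Set.Icc a u) := fun t ht =>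
  (Real.continuousAt_rpow_const t p (Or.inl (ne_of_gt (lt_of_lt_of_le ha ht.1)))).continuousWithinAt

lemma bddAbove_phiF {σ a u : ℝ} (ha : 0 < a) :
    BddAbove (phiF σ a u '' Set.Icc a u) := by
  apply IsCompact.bddAbove_image isCompact_Icc
  unfold phiF fhat fCNL
  apply ContinuousOn.div
  · exact (continuousOn_const.add (continuousOn_const.mul
      (continuousOn_id.sub continuousOn_const))).sub (continuousOn_rpow_Icc ha)
  · exact continuousOn_rpow_Icc ha
  · intro t ht
    exact ne_of_gt (Real.rpow_pos_of_pos (lt_of_lt_of_le ha ht.1) _)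

lemma bddAbove_phiG {σ a u : ℝ} (ha : 0 < a) :
    BddAbove (phiG σ a u '' Set.Icc a u) := by
  apply IsCompact.bddAbove_image isCompact_Icc
  unfold phiG ghat gCNL
  apply ContinuousOn.div
  · exact (continuousOn_rpow_Icc ha).sub (continuousOn_const.add (continuousOn_const.mul
      (continuousOn_id.sub continuousOn_const)))
  · exact continuousOn_rpow_Icc ha
  · intro t ht
    exact ne_of_gt (Real.rpow_pos_of_pos (lt_of_lt_of_le ha ht.1) _)

/-- Shrinking the left endpoint does not increase the max relative error of f. -/
lemma PhiF_shrink {σ ε a b u : ℝ} (hσ1 : σ ≤ 1) (hε : 0 ≤ ε) (ha : 0 < a)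
    (hab : a ≤ b) (hbu : b < u) (h : PhiF σ a u ≤ ε) : PhiF σ b u ≤ ε := by
  apply Real.sSup_le _ hε
  rintro x ⟨t, ht, rfl⟩
  calc phiF σ b u t ≤ phiF σ a u t := phiF_shrink hσ1 ha hab hbu ht.1 ht.2
    _ ≤ PhiF σ a u := le_csSup (bddAbove_phiF ha)
        ⟨t, ⟨hab.trans ht.1, ht.2⟩, rfl⟩
    _ ≤ ε := h

/-- Shrinking the left endpoint does not increase the max relative error of g. -/
lemma PhiG_shrink {σ ε a b u : ℝ} (hσ0 : 0 ≤ σ) (hσ1 : σ ≤ 1) (hε : 0 ≤ ε) (ha : 0 < a)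
    (hab : a ≤ b) (hbu : b < u) (h : PhiG σ a u ≤ ε) : PhiG σ b u ≤ ε := by
  apply Real.sSup_le _ hε
  rintro x ⟨t, ht, rfl⟩
  calc phiG σ b u t ≤ phiG σ a u t := phiG_shrink hσ0 hσ1 ha hab hbu ht.1 ht.2
    _ ≤ PhiG σ a u := le_csSup (bddAbove_phiG ha)
        ⟨t, ⟨hab.trans ht.1, ht.2⟩, rfl⟩
    _ ≤ ε := h

/-- Theorem 3: the greedy discretization uses the minimum number of sub-intervals. -/
theorem stmt_7 (σ ε L U : ℝ) (hσ0 : 0 ≤ σ) (hσ1 : σ ≤ 1) (hε : 0 < ε)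
    (hL : 0 < L) (hLU : L < U)
    (K : ℕ) (hK : 1 ≤ K) (c : ℕ → ℝ)
    (hc1 : c 1 = L) (hcK : c (K + 1) = U)
    (hgreedy : ∀ k, 1 ≤ k → k ≤ K →
      c (k + 1) ∈ Set.Ioc (c k) U ∧
      PhiF σ (c k) (c (k + 1)) ≤ ε ∧ PhiG σ (c k) (c (k + 1)) ≤ ε ∧
      ∀ u ∈ Set.Ioc (c k) U, PhiF σ (c k) u ≤ ε → PhiG σ (c k) u ≤ ε → u ≤ c (k + 1))
    (K' : ℕ) (hK' : 1 ≤ K') (d : ℕ → ℝ)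
    (hd1 : d 1 = L) (hdK' : d (K' + 1) = U)
    (hdmono : ∀ k, 1 ≤ k → k ≤ K' → d k ≤ d (k + 1))
    (hdfeas : ∀ k, 1 ≤ k → k ≤ K' → d k < d (k + 1) →
      PhiF σ (d k) (d (k + 1)) ≤ ε ∧ PhiG σ (d k) (d (k + 1)) ≤ ε) :
    K ≤ K' := by
  -- c is strictly increasing on 1..K+1
  have hclt : ∀ l, 1 ≤ l → l ≤ K + 1 → ∀ k, 1 ≤ k → k < l → c k < c l := by
    intro l
    induction l with
    | zero => omega
    | succ n ih =>
      intro _ hn k hk hkl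
      rcases Nat.lt_or_ge k n with h | h
      · have hn1 : 1 ≤ n := by omega
        exact lt_trans (ih hn1 (by omega) k hk h) (hgreedy n hn1 (by omega)).1.1
      · have : k = n := by omega
        subst this
        exact (hgreedy k hk (by omega)).1.1
  -- L ≤ c k for k in range
  have hcL : ∀ k, 1 ≤ k → k ≤ K + 1 → L ≤ c k := by
    intro k hk hkK
    rcases eq_or_lt_of_le hk with h | h
    · rw [← h, hc1]
    · rw [← hc1]; exact (hclt k hk hkK 1 le_rfl h).le
  -- d is monotone on 1..K'+1
  have hdle : ∀ l, 1 ≤ l → l ≤ K' + 1 → ∀ k, 1 ≤ k → k ≤ l → d k ≤ d l := by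
    intro l
    induction l with
    | zero => omega
    | succ n ih =>
      intro _ hn k hk hkl
      rcases Nat.lt_or_ge n 1 with h | h
      · have hn0 : n = 0 := by omega
        have hk1 : k = 1 := by omega
        subst hn0; subst hk1; exact le_rfl
      · rcases Nat.lt_or_ge n k with h2 | h2
        · have : k = n + 1 := by omega
          subst this; exact le_rfl
        · exact (ih h (by omega) k hk h2).trans (hdmono n h (by omega))
  have hdL : ∀ k, 1 ≤ k → k ≤ K' + 1 → L ≤ d k := by
    intro k hk hkK
    rw [← hd1]; exact hdle k hk hkK 1 le_rfl hk
  have hdU : ∀ k, 1 ≤ k → k ≤ K' + 1 → d k ≤ U := by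
    intro k hk hkK
    rw [← hdK']; exact hdle (K' + 1) (by omega) le_rfl k hk hkK
  -- main induction: d k ≤ c k
  have main : ∀ k, 1 ≤ k → k ≤ K + 1 → k ≤ K' + 1 → d k ≤ c k := by
    intro k
    induction k with
    | zero => omega
    | succ n ih =>
      intro _ hnK hnK'
      rcases Nat.lt_or_ge n 1 with h | h
      · have : n = 0 := by omega
        subst this
        rw [hd1, hc1]
      · have hnK2 : n ≤ K := by omega
        have hnK'2 : n ≤ K' := by omega
        have hdc : d n ≤ c n := ih h (by omega) (by omega)
        rcases le_or_gt (d (n + 1)) (c n) with hcase | hcase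
        · exact hcase.trans (hgreedy n h hnK2).1.1.le
        · -- c n < d (n+1); shrink the feasible interval [d n, d (n+1)] to [c n, d (n+1)]
          have hdlt : d n < d (n + 1) := lt_of_le_of_lt hdc hcase
          have hfeas := hdfeas n h hnK'2 hdlt
          have hdn_pos : 0 < d n := lt_of_lt_of_le hL (hdL n h (by omega))
          have hPF : PhiF σ (c n) (d (n + 1)) ≤ ε :=
            PhiF_shrink hσ1 hε.le hdn_pos hdc hcase hfeas.1
          have hPG : PhiG σ (c n) (d (n + 1)) ≤ ε :=
            PhiG_shrink hσ0 hσ1 hε.le hdn_pos hdc hcase hfeas.2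
          exact (hgreedy n h hnK2).2.2.2 (d (n + 1))
            ⟨hcase, hdU (n + 1) (by omega) (by omega)⟩ hPF hPG
  by_contra hcon
  push_neg at hcon
  have h1 : d (K' + 1) ≤ c (K' + 1) := main (K' + 1) (by omega) (by omega) le_rfl
  rw [hdK'] at h1
  have h2 : c (K' + 1) < c (K + 1) := hclt (K + 1) (by omega) le_rfl (K' + 1) (by omega) (by omega)
  rw [hcK] at h2
  linarith
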